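/- If ∑_l |⟨ψ_l,ψ_k⟩|² < ∞ for every k, then the Gram operator G of (ψ_k) is a closed operator on ℓ². -/

import Mathlib

open Filter Topology
open scoped ComplexInnerProductSpace

/-- If `∑_l |⟨ψ l, ψ k⟩|² < ∞` for every `k`, then the Gram operator `G` of `(ψ k)` is a
closed operator on `ℓ²`, i.e. its graph is a closed subset of `ℓ² × ℓ²`. -/
theorem stmt11 {H : Type*} [NormedAddCommGroup H] [InnerProductSpace ℂ H] [CompleteSpace H]
    (ψ : ℕ → H) (h : ∀ k : ℕ, Memℓp (fun l => ⟪ψ k, ψ l⟫) 2) :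
    IsClosed {p : lp (fun _ : ℕ => ℂ) 2 × lp (fun _ : ℕ => ℂ) 2 |
      ∀ k : ℕ, Tendsto (fun n => ∑ l ∈ Finset.range n, ⟪ψ k, ψ l⟫ * (p.1 : ℕ → ℂ) l)
        atTop (𝓝 ((p.2 : ℕ → ℂ) k))} := by
  have hrow : ∀ k : ℕ, Memℓp (fun l => (starRingEnd ℂ) ⟪ψ k, ψ l⟫) 2 := by
    intro k
    have h2 : (0 : ℝ) < (2 : ENNReal).toReal := by norm_num
    rw [memℓp_gen_iff h2]
    have := (memℓp_gen_iff h2).1 (h k)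
    simp only [RCLike.norm_conj]; exact this
  set row : ℕ → lp (fun _ : ℕ => ℂ) 2 := fun k => ⟨_, hrow k⟩ with hrowdef
  have hsum : ∀ (k : ℕ) (x : lp (fun _ : ℕ => ℂ) 2),
      HasSum (fun l => ⟪ψ k, ψ l⟫ * (x : ℕ → ℂ) l) ⟪row k, x⟫ := by
    intro k x
    have := lp.hasSum_inner (𝕜 := ℂ) (row k) x
    simpa [RCLike.inner_apply, hrowdef, mul_comm] using this
  have hset : {p : lp (fun _ : ℕ => ℂ) 2 × lp (fun _ : ℕ => ℂ) 2 |
      ∀ k : ℕ, Tendsto (fun n => ∑ l ∈ Finset.range n, ⟪ψ k, ψ l⟫ * (p.1 : ℕ → ℂ) l)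
        atTop (𝓝 ((p.2 : ℕ → ℂ) k))} =
      ⋂ k : ℕ, {p : lp (fun _ : ℕ => ℂ) 2 × lp (fun _ : ℕ => ℂ) 2 |
        ⟪row k, p.1⟫ = (p.2 : ℕ → ℂ) k} := by
    ext p
    simp only [Set.mem_setOf_eq, Set.mem_iInter]
    refine forall_congr' fun k => ?_
    constructor
    · intro ht
      exact tendsto_nhds_unique ((hsum k p.1).tendsto_sum_nat) ht
    · intro he
      simpa [he] using (hsum k p.1).tendsto_sum_nat
  rw [hset]
  refine isClosed_iInter fun k => ?_
  apply isClosed_eq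
  · exact (innerSL ℂ (row k)).continuous.comp continuous_fst
  · exact (continuous_apply k).comp
      ((lp.uniformContinuous_coe (p := 2)).continuous.comp continuous_snd)
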